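/- Let (E, Λ, p) and (F, Λ, q) be locally Hilbert space models over the same directed index set Λ and let V ∈ 𝓛(E, F). Then V is surjective and satisfies ⟨V x, V y⟩ = ⟨x, y⟩ for all x, y ∈ E if and only if for every λ ∈ Λ the restriction V_λ : p λ → q λ is a unitary operator between the Hilbert spaces p λ and q λ (i.e. a surjective linear map preserving inner products). -/

import Mathlib

open scoped InnerProductSpace

/-- The orthogonal projection of an inner product space onto a complete submodule,
viewed as a continuous linear map of the ambient space into itself. -/
noncomputable def projL {E : Type*} [NormedAddCommGroup E] [InnerProductSpace ℂ E]
    (K : Submodule ℂ E) [CompleteSpace K] : E →L[ℂ] E :=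
  K.subtypeL.comp K.orthogonalProjectionOnto

/-- An element of `𝓛(E, F)` for two locally Hilbert space models `(E, Λ, p)` and `(F, Λ, q)`
over the same index set: a linear map `E → F` mapping each `p l` into `q l`, whose
restrictions `p l → q l` are continuous (bounded) operators, and which intertwines the
orthogonal projections `projL (p l)` and `projL (q l)`. -/
structure LocOpPair {E F : Type*} [NormedAddCommGroup E] [InnerProductSpace ℂ E]
    [NormedAddCommGroup F] [InnerProductSpace ℂ F]
    {Λ : Type*} (p : Λ → Submodule ℂ E) (q : Λ → Submodule ℂ F)
    [∀ l, CompleteSpace (p l)] [∀ l, CompleteSpace (q l)] where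
  toFun : E →ₗ[ℂ] F
  restr : ∀ l, p l →L[ℂ] q l
  restr_eq : ∀ l (x : p l), (restr l x : F) = toFun x
  proj_comm : ∀ l (x : E), toFun (projL (p l) x) = projL (q l) (toFun x)

/-- **Theorem 2.2 (iv).**  `V ∈ 𝓛(E, F)` is a locally unitary operator (surjective and
inner-product preserving) iff each restriction `V_λ : p λ → q λ` is a unitary operator
between the Hilbert spaces `p λ` and `q λ`. -/
theorem locOpPair_unitary_iff
    {E F : Type*} [NormedAddCommGroup E] [InnerProductSpace ℂ E]
    [NormedAddCommGroup F] [InnerProductSpace ℂ F]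
    {Λ : Type*} [PartialOrder Λ] [IsDirected Λ (· ≤ ·)]
    (p : Λ → Submodule ℂ E) (q : Λ → Submodule ℂ F)
    [∀ l, CompleteSpace (p l)] [∀ l, CompleteSpace (q l)]
    (hmonop : Monotone p) (hexhp : ∀ x : E, ∃ l, x ∈ p l)
    (hmonoq : Monotone q) (hexhq : ∀ y : F, ∃ l, y ∈ q l)
    (V : LocOpPair p q) :
    (Function.Surjective V.toFun ∧
        ∀ x y : E, ⟪V.toFun x, V.toFun y⟫_ℂ = ⟪x, y⟫_ℂ) ↔
      ∀ l, Function.Surjective (V.restr l) ∧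
        ∀ x y : p l, ⟪V.restr l x, V.restr l y⟫_ℂ = ⟪x, y⟫_ℂ := by
  constructor
  · rintro ⟨hsurj, hinner⟩ l
    constructor
    · rintro ⟨y, hy⟩
      obtain ⟨x, hx⟩ := hsurj y
      refine ⟨⟨projL (p l) x, ?_⟩, ?_⟩
      · exact ((p l).orthogonalProjectionOnto x).2
      · apply Subtype.ext
        rw [V.restr_eq]
        simp only
        rw [V.proj_comm, hx]
        simp [projL, Submodule.starProjection_eq_self_iff.mpr hy, ← Submodule.starProjection_apply]
    · intro x y
      rw [Submodule.coe_inner, V.restr_eq, V.restr_eq, hinner]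
      rfl
  · intro h
    constructor
    · intro y
      obtain ⟨l, hl⟩ := hexhq y
      obtain ⟨x, hx⟩ := (h l).1 ⟨y, hl⟩
      exact ⟨x, by rw [← V.restr_eq, hx]⟩
    · intro x y
      obtain ⟨l, hl⟩ := hexhp x
      obtain ⟨m, hm⟩ := hexhp y
      obtain ⟨n, hn, hn'⟩ := directed_of (· ≤ ·) l m
      have hx : x ∈ p n := hmonop hn hl
      have hy : y ∈ p n := hmonop hn' hm
      have := (h n).2 ⟨x, hx⟩ ⟨y, hy⟩
      rwa [Submodule.coe_inner, Submodule.coe_inner, V.restr_eq, V.restr_eq] at this
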